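/- Let τ₁, …, τ_M be i.i.d. real random variables, and for a monotone family of intervals Ĉ_τ define the miscoverage L(τ) := P[(S,R) : R ∉ Ĉ_τ(S)], a decreasing right-continuous function of τ, and τ* := inf{τ : L(τ) ≤ ε}. If τ̃ = τ_{(M−k)} is the (M−k)-th order statistic with k = k(M, ε, δ) = max{j : F_{Bin(M,ε)}(j) ≤ δ}, then P[L(τ̃) > ε] ≤ δ. -/

import Mathlib

open MeasureTheory ProbabilityTheory

/-- The `j`-th smallest value (1-indexed) among `v 0, …, v (M-1)`. -/
noncomputable def orderStat {M : ℕ} (v : Fin M → ℝ) (j : ℕ) : ℝ :=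
  (List.insertionSort (· ≤ ·) (List.ofFn v)).getD (j - 1) 0

/-- Binomial CDF: `F_{Bin(m,p)}(k) = ∑_{i=0}^k C(m,i) p^i (1-p)^{m-i}`. -/
noncomputable def binCDF (m : ℕ) (p : ℝ) (k : ℕ) : ℝ :=
  ∑ i ∈ Finset.range (k + 1), (m.choose i : ℝ) * p ^ i * (1 - p) ^ (m - i)

lemma sorted_get_le_iff (l : List ℝ) (hl : l.Pairwise (· ≤ ·)) {j : ℕ} (hj : j < l.length) (t : ℝ) :
    l.get ⟨j, hj⟩ ≤ t ↔ j + 1 ≤ l.countP (fun x => decide (x ≤ t)) := by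
  constructor
  · intro h
    have htake : (l.take (j+1)).countP (fun x => decide (x ≤ t)) = (l.take (j+1)).length := by
      rw [List.countP_eq_length]
      intro a ha
      simp only [decide_eq_true_iff]
      obtain ⟨i, hi, rfl⟩ := List.mem_iff_getElem.1 ha
      rw [List.getElem_take]
      refine le_trans ?_ h
      have hil : (l.take (j+1)).length = j + 1 := by rw [List.length_take]; omega
      have : i ≤ j := by rw [hil] at hi; omega
      exact hl.rel_get_of_le (by exact this : (⟨i, by omega⟩ : Fin l.length) ≤ ⟨j, hj⟩)
    have hlen : (l.take (j+1)).length = j + 1 := by rw [List.length_take]; omega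
    calc j + 1 = (l.take (j+1)).countP (fun x => decide (x ≤ t)) := by rw [htake, hlen]
    _ ≤ l.countP (fun x => decide (x ≤ t)) := by
        conv_rhs => rw [← List.take_append_drop (j+1) l]
        rw [List.countP_append]; omega
  · intro h
    by_contra hc
    push_neg at hc
    have hdrop : (l.drop j).countP (fun x => decide (x ≤ t)) = 0 := by
      rw [List.countP_eq_zero]
      intro a ha
      simp only [decide_eq_true_iff, not_le]
      obtain ⟨i, hi, rfl⟩ := List.mem_iff_getElem.1 ha
      rw [List.getElem_drop]
      refine lt_of_lt_of_le hc ?_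
      exact hl.rel_get_of_le (by simp : (⟨j, hj⟩ : Fin l.length) ≤ ⟨j + i, by simp at hi; omega⟩)
    have : l.countP (fun x => decide (x ≤ t)) ≤ j := by
      conv_lhs => rw [← List.take_append_drop j l]
      rw [List.countP_append, hdrop]
      have := List.countP_le_length (l := l.take j) (p := fun x => decide (x ≤ t))
      rw [List.length_take] at this; omega
    omega


lemma countP_ofFn {M : ℕ} (v : Fin M → ℝ) (p : ℝ → Bool) :
    (List.ofFn v).countP p = (Finset.univ.filter (fun i => p (v i) = true)).card := by
  induction M with
  | zero => simp
  | succ n ih =>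
    rw [List.ofFn_succ, List.countP_cons, ih (fun i => v i.succ)]
    rw [Finset.card_filter, Finset.card_filter, Fin.sum_univ_succ]
    simp [Function.comp]
    ring

lemma orderStat_le_iff {M : ℕ} (v : Fin M → ℝ) {j : ℕ} (hj1 : 1 ≤ j) (hjM : j ≤ M) (t : ℝ) :
    orderStat v j ≤ t ↔ j ≤ (Finset.univ.filter (fun i => v i ≤ t)).card := by
  set l := List.insertionSort (· ≤ ·) (List.ofFn v) with hl
  have hlen : l.length = M := by rw [hl, List.length_insertionSort, List.length_ofFn]
  have hsorted : l.Pairwise (· ≤ ·) := List.pairwise_insertionSort _ _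
  have hjl : j - 1 < l.length := by omega
  have : orderStat v j = l.get ⟨j - 1, hjl⟩ := by
    rw [orderStat, ← hl, List.getD_eq_getElem _ _ hjl]; rfl
  rw [this, sorted_get_le_iff l hsorted hjl t]
  have hperm : l.countP (fun x => decide (x ≤ t)) = (List.ofFn v).countP (fun x => decide (x ≤ t)) :=
    (List.perm_insertionSort _ _).countP_eq _
  rw [hperm, countP_ofFn]
  have : Finset.univ.filter (fun i => decide (v i ≤ t) = true) = Finset.univ.filter (fun i => v i ≤ t) := by
    simp
  rw [this]
  omega

lemma choose_id1 {M i : ℕ} (h0 : 0 < i) (hiM : i ≤ M) :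
    M.choose i * i = M * (M-1).choose (i-1) := by
  have h := Nat.add_one_mul_choose_eq (M-1) (i-1)
  rw [show M-1+1 = M from by omega, show i-1+1 = i from by omega] at h
  exact h.symm

lemma choose_id2 {M i : ℕ} (hiM : i < M) :
    M.choose i * (M - i) = M * (M-1).choose i := by
  have h := choose_id1 (M := M) (i := M - i) (by omega) (by omega)
  rw [Nat.choose_symm (by omega : i ≤ M)] at h
  rw [show M - i - 1 = M - 1 - i from by omega] at h
  rw [Nat.choose_symm (by omega : i ≤ M - 1)] at h
  exact h

lemma binCDF_hasDeriv (M k : ℕ) (hk : k < M) (p : ℝ) :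
    HasDerivAt (fun q => binCDF M q k)
      (-(M * (M-1).choose k * p ^ k * (1 - p) ^ (M - 1 - k))) p := by
  have key : ∀ i ∈ Finset.range (k+1), HasDerivAt (fun q => (M.choose i : ℝ) * q ^ i * (1 - q) ^ (M - i))
      ((if i = 0 then 0 else (M * (M-1).choose (i-1) * p ^ (i-1) * (1 - p) ^ (M - 1 - (i-1))))
        - M * (M-1).choose i * p ^ i * (1 - p) ^ (M - 1 - i)) p := by
    intro i hi
    simp only [Finset.mem_range] at hi
    have hiM : i < M := by omega
    have h1 : HasDerivAt (fun q : ℝ => q ^ i) (i * p ^ (i-1)) p := by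
      simpa using hasDerivAt_pow i p
    have h2 : HasDerivAt (fun q : ℝ => (1 - q) ^ (M - i)) (-((M - i : ℕ) * (1 - p) ^ (M - i - 1))) p := by
      have hb : HasDerivAt (fun q : ℝ => 1 - q) (-1) p := by
        simpa using (hasDerivAt_id p).const_sub 1
      have := (hasDerivAt_pow (M - i) (1 - p)).comp p hb
      refine this.congr_deriv ?_
      ring
    have h3 := ((h1.const_mul (M.choose i : ℝ)).mul h2)
    refine h3.congr_deriv ?_
    have c2 : (M.choose i : ℝ) * ((M - i : ℕ) : ℝ) = M * (M-1).choose i := by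
      exact_mod_cast congrArg (Nat.cast (R := ℝ)) (choose_id2 hiM)
    rcases Nat.eq_zero_or_pos i with rfl | hi0
    · simp
    · have c1 : (M.choose i : ℝ) * i = M * (M-1).choose (i-1) :=
        mod_cast congrArg (Nat.cast (R := ℝ)) (choose_id1 hi0 (le_of_lt hiM))
      rw [if_neg (by omega)]
      have e1 : M - 1 - (i - 1) = M - i := by omega
      have e2 : M - 1 - i = M - i - 1 := by omega
      rw [e1, e2, ← c1, ← c2]
      ring
  have hsum := HasDerivAt.fun_sum key
  refine hsum.congr_deriv ?_
  rw [Finset.sum_sub_distrib]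
  have hshift : ∑ i ∈ Finset.range (k+1), (if i = 0 then (0:ℝ) else (M * (M-1).choose (i-1) * p ^ (i-1) * (1 - p) ^ (M - 1 - (i-1))))
      = ∑ i ∈ Finset.range k, (M * (M-1).choose i * p ^ i * (1 - p) ^ (M - 1 - i) : ℝ) := by
    rw [Finset.sum_range_succ']
    simp
  rw [hshift, Finset.sum_range_succ]
  ring

lemma binCDF_anti (M k : ℕ) (hk : k < M) {p q : ℝ} (h0 : 0 ≤ p) (hpq : p ≤ q) (h1 : q ≤ 1) :
    binCDF M q k ≤ binCDF M p k := by
  have hanti : AntitoneOn (fun x => binCDF M x k) (Set.Icc 0 1) := by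
    apply antitoneOn_of_deriv_nonpos (convex_Icc 0 1)
    · exact fun x _ => ((binCDF_hasDeriv M k hk x).continuousAt).continuousWithinAt
    · intro x _
      exact (binCDF_hasDeriv M k hk x).differentiableAt.differentiableWithinAt
    · intro x hx
      rw [interior_Icc] at hx
      rw [(binCDF_hasDeriv M k hk x).deriv]
      have h1x : (0:ℝ) ≤ 1 - x := by linarith [hx.2]
      have hx0 : (0:ℝ) ≤ x := le_of_lt hx.1
      have : (0:ℝ) ≤ (M:ℝ) * (M-1).choose k * x ^ k * (1 - x) ^ (M - 1 - k) := by positivity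
      linarith
  exact hanti ⟨h0, le_trans hpq h1⟩ ⟨le_trans h0 hpq, h1⟩ hpq

lemma binom_count {Ω : Type*} [MeasurableSpace Ω] (μ : Measure Ω) [IsProbabilityMeasure μ]
    (M : ℕ) (τ : Fin M → Ω → ℝ) (hmeas : ∀ i, Measurable (τ i))
    (hindep : iIndepFun τ μ)
    (t : ℝ) (P : ENNReal) (hP : ∀ i, μ {ω | t < τ i ω} = P) (k : ℕ) :
    μ {ω | (Finset.univ.filter (fun i => t < τ i ω)).card ≤ k}
      = ∑ j ∈ Finset.range (k+1), (M.choose j : ENNReal) * P ^ j * (1 - P) ^ (M - j) := by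
  classical
  set A : Finset (Fin M) → Set Ω := fun s => {ω | Finset.univ.filter (fun i => t < τ i ω) = s} with hA
  set S : Finset (Finset (Fin M)) := (Finset.range (k+1)).biUnion (fun j => Finset.powersetCard j Finset.univ) with hS
  have hmemS : ∀ s : Finset (Fin M), s ∈ S ↔ s.card ≤ k := by
    intro s
    simp only [hS, Finset.mem_biUnion, Finset.mem_range, Finset.mem_powersetCard]
    constructor
    · rintro ⟨j, hj, -, rfl⟩; omega
    · intro h; exact ⟨s.card, by omega, Finset.subset_univ s, rfl⟩
  have hEq : {ω | (Finset.univ.filter (fun i => t < τ i ω)).card ≤ k} = ⋃ s ∈ S, A s := by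
    ext ω
    simp only [Set.mem_setOf_eq, Set.mem_iUnion, hA, Set.mem_setOf_eq]
    constructor
    · intro h
      exact ⟨_, (hmemS _).2 h, rfl⟩
    · rintro ⟨s, hs, h⟩
      rw [h]; exact (hmemS s).1 hs
  -- A s as intersection of preimages
  have hAeq : ∀ s : Finset (Fin M), A s = ⋂ i ∈ (Finset.univ : Finset (Fin M)),
      τ i ⁻¹' (if i ∈ s then Set.Ioi t else Set.Iic t) := by
    intro s
    ext ω
    simp only [hA, Set.mem_setOf_eq, Set.mem_iInter, Finset.mem_univ, Set.mem_preimage,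
      forall_true_left]
    constructor
    · intro h i
      by_cases his : i ∈ s
      · simp only [if_pos his]
        have : i ∈ Finset.univ.filter (fun i => t < τ i ω) := h ▸ his
        simpa using (Finset.mem_filter.1 this).2
      · simp only [if_neg his, Set.mem_Iic]
        by_contra hc
        push_neg at hc
        exact his (h ▸ Finset.mem_filter.2 ⟨Finset.mem_univ i, hc⟩)
    · intro h
      ext i
      simp only [Finset.mem_filter, Finset.mem_univ, true_and]
      have := h i
      by_cases his : i ∈ s
      · simp only [if_pos his, Set.mem_Ioi] at this
        exact ⟨fun _ => his, fun _ => this⟩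
      · simp only [if_neg his, Set.mem_Iic] at this
        exact ⟨fun hlt => absurd hlt (not_lt.2 this), fun hc => absurd hc his⟩
  have hmeasA : ∀ s, MeasurableSet (A s) := by
    intro s
    rw [hAeq s]
    exact MeasurableSet.biInter (Set.to_countable _) fun i _ =>
      (hmeas i) (by split <;> measurability)
  have hQ : ∀ (i : Fin M), μ (τ i ⁻¹' Set.Iic t) = 1 - P := by
    intro i
    have hc : τ i ⁻¹' Set.Iic t = {ω | t < τ i ω}ᶜ := by
      ext ω; simp [Set.mem_Iic, not_lt]
    rw [hc, measure_compl (by exact (hmeas i) measurableSet_Ioi) (measure_ne_top μ _), hP i,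
      measure_univ]
  have hmuA : ∀ s : Finset (Fin M), μ (A s) = P ^ s.card * (1 - P) ^ (M - s.card) := by
    intro s
    rw [hAeq s]
    rw [hindep.measure_inter_preimage_eq_mul Finset.univ
      (sets := fun i => if i ∈ s then Set.Ioi t else Set.Iic t)
      (fun i _ => by split <;> measurability)]
    rw [← Finset.prod_filter_mul_prod_filter_not Finset.univ (· ∈ s)]
    have h1 : Finset.univ.filter (· ∈ s) = s := by simp
    have h2 : ∀ i ∈ s, μ (τ i ⁻¹' (if i ∈ s then Set.Ioi t else Set.Iic t)) = P := by
      intro i hi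
      rw [if_pos hi]
      have : τ i ⁻¹' Set.Ioi t = {ω | t < τ i ω} := by ext ω; simp
      rw [this, hP i]
    have h3 : ∀ i ∈ Finset.univ.filter (¬ · ∈ s),
        μ (τ i ⁻¹' (if i ∈ s then Set.Ioi t else Set.Iic t)) = 1 - P := by
      intro i hi
      simp only [Finset.mem_filter] at hi
      rw [if_neg hi.2, hQ i]
    rw [Finset.prod_congr h1 h2, Finset.prod_congr rfl h3, Finset.prod_const, Finset.prod_const]
    congr 1
    rw [Finset.filter_not, Finset.card_sdiff_of_subset (Finset.filter_subset _ _), h1]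
    congr 1
    rw [Finset.card_univ, Fintype.card_fin]
  -- disjointness
  have hdisj : (S : Set (Finset (Fin M))).PairwiseDisjoint A := by
    intro s _ s' _ hss
    refine Set.disjoint_left.2 fun ω hs hs' => hss ?_
    rw [hA] at hs hs'
    simp only [Set.mem_setOf_eq] at hs hs'
    rw [← hs, ← hs']
  rw [hEq, measure_biUnion_finset hdisj (fun s _ => hmeasA s), hS]
  rw [Finset.sum_biUnion]
  · refine Finset.sum_congr rfl fun j hj => ?_
    simp only [Finset.mem_range] at hj
    have : ∀ s ∈ Finset.powersetCard j (Finset.univ : Finset (Fin M)),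
        μ (A s) = P ^ j * (1 - P) ^ (M - j) := by
      intro s hs
      rw [hmuA s, (Finset.mem_powersetCard.1 hs).2]
    rw [Finset.sum_congr rfl this, Finset.sum_const, Finset.card_powersetCard, Finset.card_univ,
      Fintype.card_fin, nsmul_eq_mul, mul_assoc]
  · intro j hj j' hj' hjj
    simp only [Finset.coe_range, Set.mem_Iio] at hj hj'
    refine Finset.disjoint_left.2 fun s hs hs' => hjj ?_
    rw [← (Finset.mem_powersetCard.1 hs).2, ← (Finset.mem_powersetCard.1 hs').2]

theorem stmt_14 {Ω : Type*} [MeasurableSpace Ω] (μ : Measure Ω) [IsProbabilityMeasure μ]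
    (M : ℕ) (hM : 1 ≤ M) (τ : Fin M → Ω → ℝ)
    (hmeas : ∀ i, Measurable (τ i))
    (hindep : iIndepFun τ μ)
    (hident : ∀ i j, IdentDistrib (τ i) (τ j) μ μ)
    (L : ℝ → ℝ) (hL : ∀ (i : Fin M) (t : ℝ), (μ {ω | t < τ i ω}).toReal = L t)
    (ε δ : ℝ) (hε0 : 0 < ε) (hε1 : ε < 1) (hδ0 : 0 < δ) (hδ1 : δ < 1)
    (k : ℕ) (hkM : k ≤ M - 1)
    (hkle : binCDF M ε k ≤ δ)
    (hkmax : ∀ j : ℕ, k < j → j ≤ M - 1 → δ < binCDF M ε j) :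
    μ {ω | ε < L (orderStat (fun i => τ i ω) (M - k))} ≤ ENNReal.ofReal δ := by
  classical
  set i0 : Fin M := ⟨0, hM⟩ with hi0
  have hkM' : k < M := by omega
  -- basic facts about L
  have hPt : ∀ (i : Fin M) (t : ℝ), μ {ω | t < τ i ω} = ENNReal.ofReal (L t) := by
    intro i t
    rw [← hL i t, ENNReal.ofReal_toReal (measure_ne_top μ _)]
  have hL0 : ∀ t, 0 ≤ L t := fun t => hL i0 t ▸ ENNReal.toReal_nonneg
  have hL1 : ∀ t, L t ≤ 1 := by
    intro t
    rw [← hL i0 t]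
    have := ENNReal.toReal_mono ENNReal.one_ne_top (prob_le_one (μ := μ) (s := {ω | t < τ i0 ω}))
    simpa using this
  have hanti : ∀ {t t' : ℝ}, t ≤ t' → L t' ≤ L t := by
    intro t t' h
    rw [← hL i0 t, ← hL i0 t']
    exact ENNReal.toReal_mono (measure_ne_top μ _)
      (measure_mono fun ω hw => lt_of_le_of_lt h hw)
  -- the set S and its infimum
  set S : Set ℝ := {t | L t ≤ ε} with hSdef
  have hSne : S.Nonempty := by
    have hm : Antitone (fun n : ℕ => {ω | (n:ℝ) < τ i0 ω}) := by
      intro n m hnm ω hw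
      simp only [Set.mem_setOf_eq] at hw ⊢
      have : (n:ℝ) ≤ m := Nat.cast_le.2 hnm
      linarith
    have hInt : ⋂ n : ℕ, {ω | (n:ℝ) < τ i0 ω} = ∅ := by
      ext ω
      simp only [Set.mem_iInter, Set.mem_setOf_eq, Set.mem_empty_iff_false, iff_false, not_forall,
        not_lt]
      obtain ⟨n, hn⟩ := exists_nat_gt (τ i0 ω)
      exact ⟨n, hn.le⟩
    have htd := tendsto_measure_iInter_atTop (μ := μ)
      (s := fun n : ℕ => {ω | (n:ℝ) < τ i0 ω})
      (fun n => (by exact (hmeas i0) measurableSet_Ioi :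
        MeasurableSet {ω | ((n:ℕ):ℝ) < τ i0 ω}).nullMeasurableSet) hm ⟨0, measure_ne_top μ _⟩
    rw [hInt, measure_empty] at htd
    have := htd.eventually_lt_const (by simp [hε0] : (0:ENNReal) < ENNReal.ofReal ε)
    obtain ⟨n, hn⟩ := this.exists
    refine ⟨n, ?_⟩
    show L n ≤ ε
    rw [← hL i0 n]
    calc (μ {ω | (n:ℝ) < τ i0 ω}).toReal ≤ (ENNReal.ofReal ε).toReal :=
        ENNReal.toReal_mono ENNReal.ofReal_ne_top hn.le
    _ = ε := ENNReal.toReal_ofReal hε0.le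
  have hSbdd : BddBelow S := by
    have hm : Monotone (fun n : ℕ => {ω | (-(n:ℝ)) < τ i0 ω}) := by
      intro n m hnm ω hw
      simp only [Set.mem_setOf_eq] at hw ⊢
      have : (n:ℝ) ≤ m := Nat.cast_le.2 hnm
      linarith
    have hUn : ⋃ n : ℕ, {ω | (-(n:ℝ)) < τ i0 ω} = Set.univ := by
      ext ω
      simp only [Set.mem_iUnion, Set.mem_setOf_eq, Set.mem_univ, iff_true]
      obtain ⟨n, hn⟩ := exists_nat_gt (-(τ i0 ω))
      exact ⟨n, by linarith⟩
    have htd := tendsto_measure_iUnion_atTop (μ := μ) hm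
    rw [hUn, measure_univ] at htd
    have hlt : ENNReal.ofReal ε < 1 := by
      rw [← ENNReal.ofReal_one]
      exact ENNReal.ofReal_lt_ofReal_iff_of_nonneg hε0.le |>.2 hε1
    obtain ⟨n, hn⟩ := (htd.eventually_const_lt hlt).exists
    refine ⟨-(n:ℝ), fun u hu => ?_⟩
    by_contra hc
    push_neg at hc
    have h1 : L u ≤ ε := hu
    have h2 : ε < L (-(n:ℝ)) := by
      rw [← hL i0 (-(n:ℝ))]
      calc ε = (ENNReal.ofReal ε).toReal := (ENNReal.toReal_ofReal hε0.le).symm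
      _ < (μ {ω | (-(n:ℝ)) < τ i0 ω}).toReal :=
          (ENNReal.toReal_lt_toReal ENNReal.ofReal_ne_top (measure_ne_top μ _)).2 hn
    have := hanti hc.le
    linarith
  set tstar : ℝ := sInf S with htstar
  have h_gt : ∀ t, t < tstar → ε < L t := by
    intro t ht
    by_contra hc
    push_neg at hc
    exact absurd (csInf_le hSbdd hc) (not_le.2 ht)
  have h_le_gt : ∀ u, tstar < u → L u ≤ ε := by
    intro u hu
    obtain ⟨s, hsS, hsu⟩ := (csInf_lt_iff hSbdd hSne).1 hu
    exact le_trans (hanti hsu.le) hsS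
  have h_le_star : L tstar ≤ ε := by
    set u : ℝ := tstar with hu
    · -- right continuity
      have hUn : {ω | u < τ i0 ω} = ⋃ n : ℕ, {ω | u + 1/((n:ℝ)+1) < τ i0 ω} := by
        ext ω
        simp only [Set.mem_setOf_eq, Set.mem_iUnion]
        constructor
        · intro h
          obtain ⟨n, hn⟩ := exists_nat_one_div_lt (by linarith : 0 < τ i0 ω - u)
          exact ⟨n, by push_cast at hn ⊢; linarith⟩
        · rintro ⟨n, hn⟩
          have : (0:ℝ) < 1/(n+1) := by positivity
          linarith
      have hdir : Directed (· ⊆ ·) (fun n : ℕ => {ω | u + 1/((n:ℝ)+1) < τ i0 ω}) := by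
        apply Monotone.directed_le
        intro n m hnm ω hw
        simp only [Set.mem_setOf_eq] at hw ⊢
        have hc : (n:ℝ) ≤ m := Nat.cast_le.2 hnm
        have : 1/((m:ℝ)+1) ≤ 1/((n:ℝ)+1) :=
          one_div_le_one_div_of_le (by positivity) (by linarith)
        linarith
      have := hdir.measure_iUnion (μ := μ)
      rw [← hUn] at this
      have hbound : ∀ n : ℕ, μ {ω | u + 1/((n:ℝ)+1) < τ i0 ω} ≤ ENNReal.ofReal ε := by
        intro n
        rw [hPt i0]
        apply ENNReal.ofReal_le_ofReal
        apply h_le_gt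
        have : (0:ℝ) < 1/((n:ℝ)+1) := by positivity
        linarith
      have hle : μ {ω | u < τ i0 ω} ≤ ENNReal.ofReal ε := this ▸ iSup_le hbound
      rw [← hL i0 u]
      calc (μ {ω | u < τ i0 ω}).toReal ≤ (ENNReal.ofReal ε).toReal :=
          ENNReal.toReal_mono ENNReal.ofReal_ne_top hle
      _ = ε := ENNReal.toReal_ofReal hε0.le
  have h_le : ∀ u, tstar ≤ u → L u ≤ ε := by
    intro u hu
    rcases eq_or_lt_of_le hu with heq | h
    · rw [← heq]; exact h_le_star
    · exact h_le_gt u h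
  -- inclusion into union of events
  set E : ℕ → Set Ω := fun n => {ω | orderStat (fun i => τ i ω) (M - k) ≤ tstar - 1/((n:ℝ)+1)}
    with hE
  have hincl : {ω | ε < L (orderStat (fun i => τ i ω) (M - k))} ⊆ ⋃ n, E n := by
    intro ω hw
    simp only [Set.mem_setOf_eq] at hw
    have hos : orderStat (fun i => τ i ω) (M - k) < tstar := by
      by_contra hc
      push_neg at hc
      exact absurd (h_le _ hc) (not_le.2 hw)
    obtain ⟨n, hn⟩ := exists_nat_one_div_lt (by linarith : 0 < tstar - orderStat (fun i => τ i ω) (M - k))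
    refine Set.mem_iUnion.2 ⟨n, ?_⟩
    simp only [hE, Set.mem_setOf_eq]
    push_cast at hn ⊢
    linarith
  -- each E n has small measure
  have hmuE : ∀ n : ℕ, μ (E n) ≤ ENNReal.ofReal δ := by
    intro n
    set t : ℝ := tstar - 1/((n:ℝ)+1) with ht
    have htlt : t < tstar := by
      have : (0:ℝ) < 1/((n:ℝ)+1) := by positivity
      simp only [ht]; linarith
    have hεt : ε < L t := h_gt t htlt
    set p : ℝ := L t with hp
    have hp0 : 0 ≤ p := hL0 t
    have hp1 : p ≤ 1 := hL1 t
    -- E n as a counting event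
    have hEcnt : E n = {ω | (Finset.univ.filter (fun i => t < τ i ω)).card ≤ k} := by
      ext ω
      simp only [hE, Set.mem_setOf_eq, ← ht]
      rw [orderStat_le_iff _ (by omega) (by omega)]
      have hsum : (Finset.univ.filter (fun i => τ i ω ≤ t)).card
          + (Finset.univ.filter (fun i => t < τ i ω)).card = M := by
        have := Finset.card_filter_add_card_filter_not
          (s := (Finset.univ : Finset (Fin M))) (p := fun i => τ i ω ≤ t)
        simp only [not_le] at this
        rw [this, Finset.card_univ, Fintype.card_fin]
      omega
    rw [hEcnt, binom_count μ M τ hmeas hindep t (ENNReal.ofReal p) (fun i => hPt i t) k]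
    have h1mp : (1 : ENNReal) - ENNReal.ofReal p = ENNReal.ofReal (1 - p) := by
      rw [ENNReal.ofReal_sub _ hp0, ENNReal.ofReal_one]
    have hsum_ne : ∀ j ∈ Finset.range (k+1),
        (M.choose j : ENNReal) * (ENNReal.ofReal p) ^ j * (1 - ENNReal.ofReal p) ^ (M - j) ≠ ⊤ := by
      intro j _
      rw [h1mp]
      exact ENNReal.mul_ne_top (ENNReal.mul_ne_top (ENNReal.natCast_ne_top _)
        (ENNReal.pow_ne_top ENNReal.ofReal_ne_top)) (ENNReal.pow_ne_top ENNReal.ofReal_ne_top)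
    have hne : (∑ j ∈ Finset.range (k+1),
        (M.choose j : ENNReal) * (ENNReal.ofReal p) ^ j * (1 - ENNReal.ofReal p) ^ (M - j)) ≠ ⊤ :=
      (ENNReal.sum_lt_top.2 fun j hj => lt_top_iff_ne_top.2 (hsum_ne j hj)).ne
    rw [← ENNReal.ofReal_toReal hne]
    apply ENNReal.ofReal_le_ofReal
    have htor : (∑ j ∈ Finset.range (k+1),
        (M.choose j : ENNReal) * (ENNReal.ofReal p) ^ j * (1 - ENNReal.ofReal p) ^ (M - j)).toReal
        = binCDF M p k := by
      rw [ENNReal.toReal_sum hsum_ne]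
      refine Finset.sum_congr rfl fun j _ => ?_
      rw [h1mp, ENNReal.toReal_mul, ENNReal.toReal_mul, ENNReal.toReal_pow, ENNReal.toReal_pow,
        ENNReal.toReal_natCast, ENNReal.toReal_ofReal hp0, ENNReal.toReal_ofReal (by linarith)]
    rw [htor]
    calc binCDF M p k ≤ binCDF M ε k := binCDF_anti M k hkM' hε0.le hεt.le hp1
    _ ≤ δ := hkle
  -- conclude
  calc μ {ω | ε < L (orderStat (fun i => τ i ω) (M - k))} ≤ μ (⋃ n, E n) := measure_mono hincl
  _ = ⨆ n, μ (E n) := by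
      apply Directed.measure_iUnion
      apply Monotone.directed_le
      intro n m hnm ω hw
      simp only [hE, Set.mem_setOf_eq] at hw ⊢
      have hc : (n:ℝ) ≤ m := Nat.cast_le.2 hnm
      have : 1/((m:ℝ)+1) ≤ 1/((n:ℝ)+1) :=
        one_div_le_one_div_of_le (by positivity) (by linarith)
      linarith
  _ ≤ ENNReal.ofReal δ := iSup_le hmuE
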